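/- arXiv:0810.1969 — 2 statements merged into one kernel-verified Lean document; each statement's English description precedes it below -/
import Mathlib

section
/- Let X be a δ-hyperbolic geodesic metric space and ρ ≥ δ₀ (the constant guaranteeing existence of centroids). There is a constant L depending only on δ and ρ such that the map assigning to each triple (a₁,a₂,a₃) the (nonempty) set of its ρ-centroids is L-coarse-Lipschitz with respect to the Hausdorff metric: if d(aᵢ, aᵢ') ≤ 1 for each i, then the Hausdorff distance between the centroid sets of (a₁,a₂,a₃) and (a₁',a₂',a₃') is at most L. -/
open Metric Set

/-- A geodesic parametrization from `a` to `b`. -/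
def IsGeodesicParam {X : Type*} [MetricSpace X] (f : ℝ → X) (a b : X) : Prop :=
  f 0 = a ∧ f (dist a b) = b ∧
    ∀ u ∈ Set.Icc (0:ℝ) (dist a b), ∀ v ∈ Set.Icc (0:ℝ) (dist a b),
      dist (f u) (f v) = |u - v|

/-- `s` is a geodesic segment from `a` to `b`. -/
def IsGeodesicSegment {X : Type*} [MetricSpace X] (s : Set X) (a b : X) : Prop :=
  ∃ f : ℝ → X, IsGeodesicParam f a b ∧ s = f '' Set.Icc 0 (dist a b)

/-- A geodesic metric space: any two points are joined by a geodesic segment. -/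
def GeodesicSpace' (X : Type*) [MetricSpace X] : Prop :=
  ∀ a b : X, ∃ s : Set X, IsGeodesicSegment s a b

/-- Rips (thin triangles) hyperbolicity: every side of every geodesic triangle lies in the
`δ`-neighborhood of the union of the other two sides. -/
def RipsHyperbolic (X : Type*) [MetricSpace X] (δ : ℝ) : Prop :=
  ∀ a b c : X, ∀ sab sbc sac : Set X,
    IsGeodesicSegment sab a b → IsGeodesicSegment sbc b c → IsGeodesicSegment sac a c →
    (∀ p ∈ sab, Metric.infDist p (sbc ∪ sac) ≤ δ) ∧
    (∀ p ∈ sbc, Metric.infDist p (sab ∪ sac) ≤ δ) ∧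
    (∀ p ∈ sac, Metric.infDist p (sab ∪ sbc) ≤ δ)


/-- `x` is a ρ-centroid of the triple `(a,b,c)`: it lies within ρ of each of three geodesic
sides of a triangle with these vertices. -/
def IsCentroid {X : Type*} [MetricSpace X] (ρ : ℝ) (a b c x : X) : Prop :=
  ∃ s₁ s₂ s₃ : Set X, IsGeodesicSegment s₁ a b ∧ IsGeodesicSegment s₂ b c ∧
    IsGeodesicSegment s₃ a c ∧
    Metric.infDist x s₁ ≤ ρ ∧ Metric.infDist x s₂ ≤ ρ ∧ Metric.infDist x s₃ ≤ ρ

/-- The set of all ρ-centroids of a triple. -/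
def centroidSet {X : Type*} [MetricSpace X] (ρ : ℝ) (a b c : X) : Set X :=
  {x | IsCentroid ρ a b c x}

namespace CentroidAux

open Metric Set

variable {X : Type*} [MetricSpace X]

theorem seg_left_mem {s : Set X} {a b : X} (h : IsGeodesicSegment s a b) : a ∈ s := by
  obtain ⟨f, ⟨h0, hd, _⟩, rfl⟩ := h
  exact ⟨0, ⟨le_rfl, dist_nonneg⟩, h0⟩

theorem seg_right_mem {s : Set X} {a b : X} (h : IsGeodesicSegment s a b) : b ∈ s := by
  obtain ⟨f, ⟨h0, hd, _⟩, rfl⟩ := h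
  exact ⟨dist a b, ⟨dist_nonneg, le_rfl⟩, hd⟩

theorem seg_nonempty {s : Set X} {a b : X} (h : IsGeodesicSegment s a b) : s.Nonempty :=
  ⟨a, seg_left_mem h⟩

theorem seg_dist_add {s : Set X} {a b : X} (h : IsGeodesicSegment s a b) {p : X}
    (hp : p ∈ s) : dist p a + dist p b = dist a b := by
  obtain ⟨f, ⟨h0, hd, hiso⟩, rfl⟩ := h
  obtain ⟨u, hu, rfl⟩ := hp
  have h1 : dist (f u) a = u := by
    rw [← h0, hiso u hu 0 ⟨le_rfl, dist_nonneg⟩, sub_zero, abs_of_nonneg hu.1]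
  have h2 : dist (f u) b = dist a b - u := by
    have h2' := hiso u hu (dist a b) ⟨dist_nonneg, le_rfl⟩
    rw [hd] at h2'
    rw [h2', abs_of_nonpos (by linarith [hu.2])]
    ring
  rw [h1, h2]; ring

theorem seg_dist_eq {s : Set X} {a b : X} (h : IsGeodesicSegment s a b) {p q : X}
    (hp : p ∈ s) (hq : q ∈ s) : dist p q = |dist p a - dist q a| := by
  obtain ⟨f, ⟨h0, hd, hiso⟩, rfl⟩ := h
  obtain ⟨u, hu, rfl⟩ := hp
  obtain ⟨v, hv, rfl⟩ := hq
  have h1 : dist (f u) a = u := by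
    rw [← h0, hiso u hu 0 ⟨le_rfl, dist_nonneg⟩, sub_zero, abs_of_nonneg hu.1]
  have h2 : dist (f v) a = v := by
    rw [← h0, hiso v hv 0 ⟨le_rfl, dist_nonneg⟩, sub_zero, abs_of_nonneg hv.1]
  rw [h1, h2, hiso u hu v hv]

theorem seg_compact {s : Set X} {a b : X} (h : IsGeodesicSegment s a b) : IsCompact s := by
  obtain ⟨f, ⟨h0, hd, hiso⟩, rfl⟩ := h
  refine isCompact_Icc.image_of_continuousOn ?_
  refine (LipschitzOnWith.of_dist_le_mul (K := 1) fun u hu v hv => ?_).continuousOn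
  rw [hiso u hu v hv]
  simp [Real.dist_eq]

theorem exists_near {s : Set X} {a b : X} (h : IsGeodesicSegment s a b) {x : X} {R : ℝ}
    (hx : infDist x s ≤ R) : ∃ p ∈ s, dist x p ≤ R := by
  obtain ⟨p, hp, hEq⟩ := (seg_compact h).exists_infDist_eq_dist (seg_nonempty h) x
  exact ⟨p, hp, hEq ▸ hx⟩

theorem infDist_chain {p : X} {A B : Set X} {d e : ℝ} (hA : A.Nonempty)
    (h : infDist p A ≤ d) (hAB : ∀ q ∈ A, infDist q B ≤ e) : infDist p B ≤ d + e := by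
  refine le_of_forall_pos_le_add fun ε hε => ?_
  obtain ⟨q, hq, hdq⟩ := (infDist_lt_iff hA).mp (lt_of_le_of_lt h (lt_add_of_pos_right d hε))
  calc infDist p B ≤ infDist q B + dist p q := infDist_le_infDist_add_dist
    _ ≤ e + (d + ε) := by linarith [hAB q hq]
    _ = d + e + ε := by ring

theorem rips_step {δ : ℝ} (geo : GeodesicSpace' X) (hyp : RipsHyperbolic X δ)
    {a b b' : X} {s s'' : Set X} (hs : IsGeodesicSegment s a b)
    (hs'' : IsGeodesicSegment s'' a b') (hbb : dist b b' ≤ 1) :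
    ∀ p ∈ s, infDist p s'' ≤ δ + 1 := by
  obtain ⟨sb, hsb⟩ := geo b b'
  intro p hp
  have hr := (hyp a b b' s sb s'' hs hsb hs'').1 p hp
  have h2 : ∀ q ∈ sb ∪ s'', infDist q s'' ≤ 1 := by
    rintro q (hq | hq)
    · have hsum := seg_dist_add hsb hq
      have hq' : dist q b' ≤ 1 := by
        have := @dist_nonneg _ _ q b; linarith
      exact le_trans (infDist_le_dist_of_mem (seg_right_mem hs'')) hq'
    · rw [infDist_zero_of_mem hq]; norm_num
  have := infDist_chain ⟨b', Or.inr (seg_right_mem hs'')⟩ hr h2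
  linarith

theorem rips_step' {δ : ℝ} (geo : GeodesicSpace' X) (hyp : RipsHyperbolic X δ)
    {a a' b' : X} {s'' s' : Set X} (hs'' : IsGeodesicSegment s'' a b')
    (hs' : IsGeodesicSegment s' a' b') (haa : dist a a' ≤ 1) :
    ∀ q ∈ s'', infDist q s' ≤ δ + 1 := by
  obtain ⟨sa, hsa⟩ := geo a a'
  intro q hq
  have hr := (hyp a a' b' sa s' s'' hsa hs' hs'').2.2 q hq
  have h2 : ∀ r ∈ sa ∪ s', infDist r s' ≤ 1 := by
    rintro r (hr' | hr')
    · have hsum := seg_dist_add hsa hr'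
      have hr'' : dist r a' ≤ 1 := by
        have := @dist_nonneg _ _ r a; linarith
      exact le_trans (infDist_le_dist_of_mem (seg_left_mem hs')) hr''
    · rw [infDist_zero_of_mem hr']; norm_num
  have := infDist_chain ⟨a', Or.inl (seg_right_mem hsa)⟩ hr h2
  linarith

theorem transfer {δ : ℝ} (geo : GeodesicSpace' X) (hyp : RipsHyperbolic X δ)
    {a b a' b' x : X} {ρ : ℝ} {s s' : Set X}
    (hs : IsGeodesicSegment s a b) (hs' : IsGeodesicSegment s' a' b')
    (ha : dist a a' ≤ 1) (hb : dist b b' ≤ 1) (hx : infDist x s ≤ ρ) :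
    infDist x s' ≤ ρ + (2 * δ + 2) := by
  obtain ⟨s'', hs''⟩ := geo a b'
  have step1 : ∀ p ∈ s, infDist p s'' ≤ δ + 1 := rips_step geo hyp hs hs'' hb
  have step2 : ∀ q ∈ s'', infDist q s' ≤ δ + 1 := rips_step' geo hyp hs'' hs' ha
  have h1 : infDist x s'' ≤ ρ + (δ + 1) := infDist_chain (seg_nonempty hs) hx step1
  have h2 : infDist x s' ≤ (ρ + (δ + 1)) + (δ + 1) :=
    infDist_chain (seg_nonempty hs'') h1 step2
  linarith

theorem core {a b c x y : X} {s₁ s₂ s₃ : Set X} {R : ℝ}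
    (h₁ : IsGeodesicSegment s₁ a b) (h₂ : IsGeodesicSegment s₂ b c)
    (h₃ : IsGeodesicSegment s₃ a c)
    (hx₁ : infDist x s₁ ≤ R) (hx₂ : infDist x s₂ ≤ R) (hx₃ : infDist x s₃ ≤ R)
    (hy₁ : infDist y s₁ ≤ R) (hy₂ : infDist y s₂ ≤ R) (hy₃ : infDist y s₃ ≤ R) :
    dist x y ≤ 7 * R := by
  obtain ⟨p₁, hp₁, hxp₁⟩ := exists_near h₁ hx₁
  obtain ⟨p₂, hp₂, hxp₂⟩ := exists_near h₂ hx₂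
  obtain ⟨p₃, hp₃, hxp₃⟩ := exists_near h₃ hx₃
  obtain ⟨q₁, hq₁, hyq₁⟩ := exists_near h₁ hy₁
  obtain ⟨q₂, hq₂, hyq₂⟩ := exists_near h₂ hy₂
  obtain ⟨q₃, hq₃, hyq₃⟩ := exists_near h₃ hy₃
  have e₁ := seg_dist_add h₁ hp₁
  have e₂ := seg_dist_add h₂ hp₂
  have e₃ := seg_dist_add h₃ hp₃
  have f₁ := seg_dist_add h₁ hq₁
  have f₂ := seg_dist_add h₂ hq₂
  have f₃ := seg_dist_add h₃ hq₃
  -- upper bounds on sums of distances to vertex pairs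
  have xab : dist x a + dist x b ≤ dist a b + 2 * R := by
    have t1 := dist_triangle x p₁ a
    have t2 := dist_triangle x p₁ b
    linarith
  have xbc : dist x b + dist x c ≤ dist b c + 2 * R := by
    have t1 := dist_triangle x p₂ b
    have t2 := dist_triangle x p₂ c
    linarith
  have xac : dist x a + dist x c ≤ dist a c + 2 * R := by
    have t1 := dist_triangle x p₃ a
    have t2 := dist_triangle x p₃ c
    linarith
  have yab : dist y a + dist y b ≤ dist a b + 2 * R := by
    have t1 := dist_triangle y q₁ a
    have t2 := dist_triangle y q₁ b
    linarith
  have ybc : dist y b + dist y c ≤ dist b c + 2 * R := by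
    have t1 := dist_triangle y q₂ b
    have t2 := dist_triangle y q₂ c
    linarith
  have yac : dist y a + dist y c ≤ dist a c + 2 * R := by
    have t1 := dist_triangle y q₃ a
    have t2 := dist_triangle y q₃ c
    linarith
  -- trivial lower bounds
  have lab : dist a b ≤ dist x a + dist x b := by
    have := dist_triangle a x b
    have c1 := dist_comm a x
    have c2 := dist_comm x b
    linarith
  have lbc : dist b c ≤ dist x b + dist x c := by
    have := dist_triangle b x c
    have c1 := dist_comm b x
    have c2 := dist_comm x c
    linarith
  have lac : dist a c ≤ dist x a + dist x c := by
    have := dist_triangle a x c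
    have c1 := dist_comm a x
    have c2 := dist_comm x c
    linarith
  have lab' : dist a b ≤ dist y a + dist y b := by
    have := dist_triangle a y b
    have c1 := dist_comm a y
    have c2 := dist_comm y b
    linarith
  have lbc' : dist b c ≤ dist y b + dist y c := by
    have := dist_triangle b y c
    have c1 := dist_comm b y
    have c2 := dist_comm y c
    linarith
  have lac' : dist a c ≤ dist y a + dist y c := by
    have := dist_triangle a y c
    have c1 := dist_comm a y
    have c2 := dist_comm y c
    linarith
  -- distance to a is pinned near the Gromov product, for both x and y
  have hxa1 : 2 * dist x a ≤ dist a b + dist a c - dist b c + 4 * R := by linarith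
  have hxa2 : dist a b + dist a c - dist b c - 2 * R ≤ 2 * dist x a := by linarith
  have hya1 : 2 * dist y a ≤ dist a b + dist a c - dist b c + 4 * R := by linarith
  have hya2 : dist a b + dist a c - dist b c - 2 * R ≤ 2 * dist y a := by linarith
  -- p₁ and q₁ are close along s₁
  have hd : dist p₁ q₁ ≤ 5 * R := by
    rw [seg_dist_eq h₁ hp₁ hq₁]
    have hA := abs_le.mp (abs_dist_sub_le p₁ x a)
    have hB := abs_le.mp (abs_dist_sub_le q₁ y a)
    have cpx := dist_comm p₁ x
    have cqy := dist_comm q₁ y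
    rw [abs_le]
    constructor <;> [skip; skip] <;> linarith [hA.1, hA.2, hB.1, hB.2]
  calc dist x y ≤ dist x p₁ + dist p₁ q₁ + dist q₁ y := dist_triangle4 x p₁ q₁ y
    _ ≤ 7 * R := by
        have := dist_comm q₁ y
        linarith

theorem param_continuousOn {f : ℝ → X} {a b : X} (h : IsGeodesicParam f a b) :
    ContinuousOn f (Set.Icc 0 (dist a b)) := by
  refine (LipschitzOnWith.of_dist_le_mul (K := 1) fun u hu v hv => ?_).continuousOn
  rw [h.2.2 u hu v hv]
  simp [Real.dist_eq]

theorem exists_centroid {δ ρ : ℝ} (hδ : 0 ≤ δ) (hδρ : δ ≤ ρ) (geo : GeodesicSpace' X)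
    (hyp : RipsHyperbolic X δ) (a b c : X) : (centroidSet ρ a b c).Nonempty := by
  obtain ⟨s₁, hs₁⟩ := geo a b
  obtain ⟨s₂, hs₂⟩ := geo b c
  obtain ⟨s₃, hs₃⟩ := geo a c
  have hs₁' := hs₁
  obtain ⟨f, hf, hseq⟩ := hs₁'
  have hcont : ContinuousOn (fun u => infDist (f u) s₂ - infDist (f u) s₃)
      (Set.Icc 0 (dist a b)) :=
    (((continuous_infDist_pt s₂).comp_continuousOn (param_continuousOn hf)).sub
      ((continuous_infDist_pt s₃).comp_continuousOn (param_continuousOn hf)))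
  have hmem : (0:ℝ) ∈ Set.Icc (infDist (f (dist a b)) s₂ - infDist (f (dist a b)) s₃)
      (infDist (f 0) s₂ - infDist (f 0) s₃) := by
    constructor
    · rw [hf.2.1, infDist_zero_of_mem (seg_left_mem hs₂)]
      have := infDist_nonneg (s := s₃) (x := b)
      linarith
    · rw [hf.1, infDist_zero_of_mem (seg_left_mem hs₃)]
      have := infDist_nonneg (s := s₂) (x := a)
      linarith
  obtain ⟨u, hu, hφu⟩ := intermediate_value_Icc' dist_nonneg hcont hmem
  set x := f u with hx
  have hx₁ : x ∈ s₁ := by rw [hseq]; exact ⟨u, hu, rfl⟩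
  have hr : infDist x s₂ = infDist x s₃ := by
    have : infDist (f u) s₂ - infDist (f u) s₃ = 0 := hφu
    linarith
  have hR := (hyp a b c s₁ s₂ s₃ hs₁ hs₂ hs₃).1 x hx₁
  have hne : (s₂ ∪ s₃).Nonempty := ⟨b, Or.inl (seg_left_mem hs₂)⟩
  have h2 : infDist x s₂ ≤ δ := by
    refine le_of_forall_pos_le_add fun ε hε => ?_
    obtain ⟨w, hw, hdw⟩ := (infDist_lt_iff hne).mp (lt_of_le_of_lt hR (lt_add_of_pos_right δ hε))
    rcases hw with hw | hw
    · exact le_trans (infDist_le_dist_of_mem hw) (le_of_lt hdw)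
    · rw [hr]
      exact le_trans (infDist_le_dist_of_mem hw) (le_of_lt hdw)
  refine ⟨x, s₁, s₂, s₃, hs₁, hs₂, hs₃, ?_, ?_, ?_⟩
  · rw [infDist_zero_of_mem hx₁]; linarith
  · linarith
  · rw [← hr]; linarith

end CentroidAux


/-- The centroid-set map on triples is coarse-Lipschitz (with uniform constant `L`) with
respect to the Hausdorff metric: moving each vertex a distance at most 1 moves the
(nonempty) set of ρ-centroids a Hausdorff distance at most `L`. -/
theorem centroid_map_coarse_lipschitz (δ : ℝ) (hδ : 0 ≤ δ) :
    ∃ δ₀ : ℝ, 0 ≤ δ₀ ∧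
      ∀ ρ : ℝ, δ₀ ≤ ρ →
        ∃ L : ℝ, 0 ≤ L ∧
          ∀ (X : Type) [MetricSpace X], GeodesicSpace' X → RipsHyperbolic X δ →
            ∀ a₁ a₂ a₃ a₁' a₂' a₃' : X,
              dist a₁ a₁' ≤ 1 → dist a₂ a₂' ≤ 1 → dist a₃ a₃' ≤ 1 →
              (centroidSet ρ a₁ a₂ a₃).Nonempty ∧
              Metric.hausdorffDist (centroidSet ρ a₁ a₂ a₃) (centroidSet ρ a₁' a₂' a₃') ≤ L := by
  refine ⟨δ, hδ, fun ρ hρ => ⟨7 * (ρ + (2 * δ + 2)), by linarith, ?_⟩⟩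
  intro X _ geo hyp a₁ a₂ a₃ a₁' a₂' a₃' h1 h2 h3
  have hρ0 : (0:ℝ) ≤ ρ := le_trans hδ hρ
  have hne : (centroidSet ρ a₁ a₂ a₃).Nonempty :=
    CentroidAux.exists_centroid hδ hρ geo hyp a₁ a₂ a₃
  have hne' : (centroidSet ρ a₁' a₂' a₃').Nonempty :=
    CentroidAux.exists_centroid hδ hρ geo hyp a₁' a₂' a₃'
  refine ⟨hne, ?_⟩
  set R : ℝ := ρ + (2 * δ + 2) with hR
  have key : ∀ x ∈ centroidSet ρ a₁ a₂ a₃, ∀ y ∈ centroidSet ρ a₁' a₂' a₃',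
      dist x y ≤ 7 * R := by
    intro x hx y hy
    obtain ⟨s₁, s₂, s₃, hs₁, hs₂, hs₃, hx₁, hx₂, hx₃⟩ := hx
    obtain ⟨t₁, t₂, t₃, ht₁, ht₂, ht₃, hy₁, hy₂, hy₃⟩ := hy
    have hx₁' : infDist x t₁ ≤ R := CentroidAux.transfer geo hyp hs₁ ht₁ h1 h2 hx₁
    have hx₂' : infDist x t₂ ≤ R := CentroidAux.transfer geo hyp hs₂ ht₂ h2 h3 hx₂
    have hx₃' : infDist x t₃ ≤ R := CentroidAux.transfer geo hyp hs₃ ht₃ h1 h3 hx₃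
    have hRρ : ρ ≤ R := by rw [hR]; linarith
    exact CentroidAux.core ht₁ ht₂ ht₃ hx₁' hx₂' hx₃'
      (le_trans hy₁ hRρ) (le_trans hy₂ hRρ) (le_trans hy₃ hRρ)
  obtain ⟨x₀, hx₀⟩ := hne
  obtain ⟨y₀, hy₀⟩ := hne'
  refine Metric.hausdorffDist_le_of_mem_dist (by rw [hR] at *; linarith) ?_ ?_
  · exact fun x hx => ⟨y₀, hy₀, key x hx y₀ hy₀⟩
  · exact fun y hy => ⟨x₀, hx₀, by rw [dist_comm]; exact key x₀ hx₀ y hy⟩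
end

section
/- Let (Γᵢ)_{i∈I} be a finite family of finite subsets of a metric space in which every ball of radius b₂ contains at most N points, and let Σ be a finite set such that every μ ∈ Σ lies within distance b₂ of some Γ_{γ(μ)}. Suppose each Γᵢ satisfies #Γᵢ ≤ b₁·(diam Γᵢ)^n for a fixed n ≥ 1, and Σ_{i∈I} diam Γᵢ ≤ b₃·D. Then #Σ ≤ c·D^n, where c depends only on b₁, b₂, b₃, N, and n. -/
lemma sum_pow_le_pow_sum' {ι : Type*} (s : Finset ι) (f : ι → ℝ)
    (hf : ∀ i ∈ s, 0 ≤ f i) {n : ℕ} (hn : 1 ≤ n) :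
    ∑ i ∈ s, f i ^ n ≤ (∑ i ∈ s, f i) ^ n := by
  have hS : 0 ≤ ∑ i ∈ s, f i := Finset.sum_nonneg hf
  calc ∑ i ∈ s, f i ^ n ≤ ∑ i ∈ s, f i * (∑ j ∈ s, f j) ^ (n - 1) := by
        refine Finset.sum_le_sum fun i hi => ?_
        have h1 : f i ≤ ∑ j ∈ s, f j := Finset.single_le_sum hf hi
        calc f i ^ n = f i * f i ^ (n - 1) := by
              rw [← pow_succ']; congr 1; omega
          _ ≤ f i * (∑ j ∈ s, f j) ^ (n - 1) := by
              exact mul_le_mul_of_nonneg_left (pow_le_pow_left₀ (hf i hi) h1 _) (hf i hi)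
    _ = (∑ i ∈ s, f i) * (∑ j ∈ s, f j) ^ (n - 1) := by rw [← Finset.sum_mul]
    _ = (∑ i ∈ s, f i) ^ n := by rw [← pow_succ']; congr 1; omega

/-- Covering/counting step: if a finite set `S` is b₂-coarsely covered by a finite family of
finite sets `Γ i`, each satisfying a polynomial cardinality bound in its diameter, the
diameters sum to at most `b₃·D`, and every b₂-ball of the ambient space has at most `N`
points, then `#S ≤ c·Dⁿ` with `c` depending only on `b₁, b₂, b₃, N, n`. -/
theorem covering_count_bound (b₁ b₂ b₃ : ℝ) (hb₁ : 0 ≤ b₁) (hb₂ : 0 < b₂) (hb₃ : 0 ≤ b₃)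
    (N n : ℕ) (hn : 1 ≤ n) :
    ∃ c : ℝ, 0 ≤ c ∧
      ∀ (X : Type) [MetricSpace X] (I : Type) [Fintype I]
        (Γ : I → Set X) (S : Set X) (γ : X → I) (D : ℝ), 0 ≤ D →
        (∀ p : X, (Metric.closedBall p b₂).Finite ∧ (Metric.closedBall p b₂).ncard ≤ N) →
        S.Finite →
        (∀ μ ∈ S, ∃ p ∈ Γ (γ μ), dist μ p ≤ b₂) →
        (∀ i : I, (Γ i).Finite ∧ ((Γ i).ncard : ℝ) ≤ b₁ * Metric.diam (Γ i) ^ n) →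
        (∑ i : I, Metric.diam (Γ i)) ≤ b₃ * D →
        (S.ncard : ℝ) ≤ c * D ^ n := by
  refine ⟨N * b₁ * b₃ ^ n, by positivity, ?_⟩
  intro X _ I _ Γ S γ D hD hball hS hcov hΓ hsum
  classical
  choose! P hP1 hP2 using hcov
  -- the finset of all points of all Γ i
  set t : Finset X := Finset.univ.biUnion (fun i => (hΓ i).1.toFinset) with ht
  set s : Finset X := hS.toFinset with hs
  have hmaps : ∀ μ ∈ s, P μ ∈ t := by
    intro μ hμ
    have hμ' : μ ∈ S := hS.mem_toFinset.mp hμ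
    exact Finset.mem_biUnion.mpr ⟨γ μ, Finset.mem_univ _, (hΓ (γ μ)).1.mem_toFinset.mpr (hP1 μ hμ')⟩
  have hfiber : ∀ p ∈ t, (s.filter fun μ => P μ = p).card ≤ N := by
    intro p _
    have hsub : ((s.filter fun μ => P μ = p) : Set X) ⊆ Metric.closedBall p b₂ := by
      intro μ hμ
      simp only [Finset.coe_filter, Set.mem_setOf_eq] at hμ
      obtain ⟨hμs, hμp⟩ := hμ
      have hμ' : μ ∈ S := hS.mem_toFinset.mp hμs
      have := hP2 μ hμ'
      rw [hμp] at this
      exact Metric.mem_closedBall.mpr this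
    calc (s.filter fun μ => P μ = p).card
        = ((s.filter fun μ => P μ = p : Finset X) : Set X).ncard := by
          rw [Set.ncard_coe_finset]
      _ ≤ (Metric.closedBall p b₂).ncard := Set.ncard_le_ncard hsub (hball p).1
      _ ≤ N := (hball p).2
  have hcard : s.card ≤ N * t.card :=
    Finset.card_le_mul_card_image_of_maps_to hmaps N hfiber
  have htcard : (t.card : ℝ) ≤ ∑ i : I, ((Γ i).ncard : ℝ) := by
    have := Finset.card_biUnion_le (s := (Finset.univ : Finset I))
      (t := fun i => (hΓ i).1.toFinset)
    push_cast
    calc (t.card : ℝ) ≤ (∑ i : I, ((hΓ i).1.toFinset.card : ℕ) : ℝ) := by exact_mod_cast this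
      _ = ∑ i : I, ((Γ i).ncard : ℝ) := by
          push_cast
          refine Finset.sum_congr rfl fun i _ => ?_
          norm_cast
          exact (Set.ncard_eq_toFinset_card _ (hΓ i).1).symm
  have hSncard : (S.ncard : ℝ) = (s.card : ℝ) := by
    rw [hs, Set.ncard_eq_toFinset_card S hS]
  have hdiam : ∀ i : I, 0 ≤ Metric.diam (Γ i) := fun i => Metric.diam_nonneg
  have key : (∑ i : I, ((Γ i).ncard : ℝ)) ≤ b₁ * (b₃ * D) ^ n := by
    calc ∑ i : I, ((Γ i).ncard : ℝ) ≤ ∑ i : I, b₁ * Metric.diam (Γ i) ^ n :=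
          Finset.sum_le_sum fun i _ => (hΓ i).2
      _ = b₁ * ∑ i : I, Metric.diam (Γ i) ^ n := by rw [Finset.mul_sum]
      _ ≤ b₁ * (∑ i : I, Metric.diam (Γ i)) ^ n := by
          exact mul_le_mul_of_nonneg_left
            (sum_pow_le_pow_sum' _ _ (fun i _ => hdiam i) hn) hb₁
      _ ≤ b₁ * (b₃ * D) ^ n := by
          exact mul_le_mul_of_nonneg_left
            (pow_le_pow_left₀ (Finset.sum_nonneg fun i _ => hdiam i) hsum _) hb₁
  calc (S.ncard : ℝ) = (s.card : ℝ) := hSncard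
    _ ≤ (N : ℝ) * (t.card : ℝ) := by exact_mod_cast hcard
    _ ≤ (N : ℝ) * (∑ i : I, ((Γ i).ncard : ℝ)) := by
        exact mul_le_mul_of_nonneg_left htcard (Nat.cast_nonneg N)
    _ ≤ (N : ℝ) * (b₁ * (b₃ * D) ^ n) := mul_le_mul_of_nonneg_left key (Nat.cast_nonneg N)
    _ = N * b₁ * b₃ ^ n * D ^ n := by ring
end
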